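/- Let ρ_{31}, ρ_{32}, ρ_{41}, ρ_{42}, ρ_{k1}, ρ_{k2}, χ, σ₁₂ be real numbers with (ρ_{31}, σ₁₂ρ_{32}) ≠ (0,0), and define τ_{4k}(β) := [ρ_{42}(ρ_{k2}ρ_{31} − ρ_{k1}ρ_{32}) + χ(βρ_{k1} − σ₁₂ρ_{k2})] / (βρ_{31} − σ₁₂ρ_{32}) on the domain D := {β ∈ ℝ : βρ_{31} − σ₁₂ρ_{32} ≠ 0}. Then τ_{4k} is injective on D if and only if (ρ_{k2}ρ_{31} − ρ_{k1}ρ_{32})(ρ_{31}ρ_{42} − χσ₁₂) ≠ 0. Moreover, if this product is zero, τ_{4k} is constant on D. (Proposition 1, second part: τ_{4k}(π,·) can be inverted for β if and only if (ρ_{k2}ρ_{31} − ρ_{k1}ρ_{32})(ρ_{31}ρ_{42} − χσ₁₂) ≠ 0.) -/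

import Mathlib

/-- Proposition 1, second part. With `(ρ₃₁, σ₁₂ρ₃₂) ≠ (0,0)`, the
reparameterized moment function
`τ_{4k}(β) = [ρ₄₂(ρ_{k2}ρ₃₁ − ρ_{k1}ρ₃₂) + χ(βρ_{k1} − σ₁₂ρ_{k2})]/(βρ₃₁ − σ₁₂ρ₃₂)`
is injective on its domain `D = {β : βρ₃₁ − σ₁₂ρ₃₂ ≠ 0}` if and only if
`(ρ_{k2}ρ₃₁ − ρ_{k1}ρ₃₂)(ρ₃₁ρ₄₂ − χσ₁₂) ≠ 0`; moreover, if this product is zero then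
`τ_{4k}` is constant on `D`. Here `s12 = σ₁₂`. -/
theorem tau4k_invertible_iff (ρ31 ρ32 ρ41 ρ42 ρk1 ρk2 χ s12 : ℝ)
    (h : (ρ31, s12 * ρ32) ≠ (0, 0)) :
    let τ : ℝ → ℝ := fun β =>
      (ρ42 * (ρk2 * ρ31 - ρk1 * ρ32) + χ * (β * ρk1 - s12 * ρk2)) /
        (β * ρ31 - s12 * ρ32)
    let D : Set ℝ := {β | β * ρ31 - s12 * ρ32 ≠ 0}
    (Set.InjOn τ D ↔ (ρk2 * ρ31 - ρk1 * ρ32) * (ρ31 * ρ42 - χ * s12) ≠ 0) ∧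
    ((ρk2 * ρ31 - ρk1 * ρ32) * (ρ31 * ρ42 - χ * s12) = 0 →
      ∀ βh ∈ D, ∀ βt ∈ D, τ βh = τ βt) := by
  intro τ D
  set P := (ρk2 * ρ31 - ρk1 * ρ32) * (ρ31 * ρ42 - χ * s12) with hP
  have key : ∀ β1 β2 : ℝ,
      (ρ42 * (ρk2 * ρ31 - ρk1 * ρ32) + χ * (β1 * ρk1 - s12 * ρk2)) *
        (β2 * ρ31 - s12 * ρ32) -
      (ρ42 * (ρk2 * ρ31 - ρk1 * ρ32) + χ * (β2 * ρk1 - s12 * ρk2)) *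
        (β1 * ρ31 - s12 * ρ32) = -P * (β1 - β2) := by
    intro β1 β2; rw [hP]; ring
  have hconst : P = 0 → ∀ βh ∈ D, ∀ βt ∈ D, τ βh = τ βt := by
    intro hP0 β1 h1 β2 h2
    simp only [τ, Set.mem_setOf_eq] at *
    rw [div_eq_div_iff h1 h2]
    have := key β1 β2
    rw [hP0] at this
    linarith
  refine ⟨⟨?_, ?_⟩, hconst⟩
  · intro hinj
    by_contra hP0
    -- find two distinct points in D
    obtain ⟨β1, β2, hne, h1, h2⟩ : ∃ β1 β2 : ℝ, β1 ≠ β2 ∧ β1 ∈ D ∧ β2 ∈ D := by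
      by_cases hr : ρ31 = 0
      · have hs : s12 * ρ32 ≠ 0 := by
          intro hs; exact h (Prod.ext hr hs)
        refine ⟨0, 1, by norm_num, ?_, ?_⟩ <;>
          simp [D, Set.mem_setOf_eq, hr, hs]
      · refine ⟨(s12 * ρ32 + 1) / ρ31, (s12 * ρ32 + 2) / ρ31, ?_, ?_, ?_⟩
        · intro heq
          field_simp at heq
          linarith
        · simp only [D, Set.mem_setOf_eq]
          field_simp
          norm_num
        · simp only [D, Set.mem_setOf_eq]
          field_simp
          norm_num
    exact hne (hinj h1 h2 (hconst hP0 β1 h1 β2 h2))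
  · intro hPne β1 h1 β2 h2 heq
    simp only [τ, Set.mem_setOf_eq] at *
    rw [div_eq_div_iff h1 h2] at heq
    have := key β1 β2
    rw [heq] at this
    have : -P * (β1 - β2) = 0 := by linarith
    rcases mul_eq_zero.1 this with h' | h'
    · exact absurd (neg_eq_zero.1 h') hPne
    · linarith
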